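/- Entropy conservation of the EC flux in the y-direction (appendix Corollary). Let left and right ideal MHD states be given (both with ρ > 0, p > 0) and define ρ̂ = ⟨z₁⟩z₅ˡⁿ, û₁ = ⟨z₂⟩/⟨z₁⟩, v̂₁ = ⟨z₃⟩/⟨z₁⟩, ŵ₁ = ⟨z₄⟩/⟨z₁⟩, p̂₁ = ⟨z₅⟩/⟨z₁⟩, p̂₂ = ((γ+1)/(2γ))·z₅ˡⁿ/z₁ˡⁿ + ((γ−1)/(2γ))·⟨z₅⟩/⟨z₁⟩, û₂ = ⟨z₁z₂⟩/⟨z₁²⟩, v̂₂ = ⟨z₁z₃⟩/⟨z₁²⟩, ŵ₂ = ⟨z₁z₄⟩/⟨z₁²⟩, B̂₁ = ⟨z₆⟩, B̂₂ = ⟨z₇⟩, B̂₃ = ⟨z₈⟩. Define g* ∈ ℝ⁸ by g₁* = ρ̂v̂₁; g₂* = ρ̂û₁v̂₁ − ⟨z₆z₇⟩; g₃* = p̂₁ + ρ̂v̂₁² + (⟨z₆²⟩+⟨z₇²⟩+⟨z₈²⟩)/2 − ⟨z₇²⟩; g₄* = ρ̂v̂₁ŵ₁ − ⟨z₇z₈⟩;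 g₅* = γv̂₁p̂₂/(γ−1) + (ρ̂v̂₁/2)(û₁²+v̂₁²+ŵ₁²) + v̂₂B̂₁² − û₂B̂₁B̂₂ + v̂₂B̂₃² − ŵ₂B̂₂B̂₃; g₆* = v̂₂B̂₁ − û₂B̂₂; g₇* = 0; g₈* = v̂₂B̂₃ − ŵ₂B̂₂. Then ⟦v⃗⟧·g* = ⟦ρv⟧ + ⟦ρv‖B⃗‖²/(2p)⟧ − ⟦ρB₂(u⃗·B⃗)/p⟧ + ⟦B₂⟧·(⟨z₁z₂⟩⟨z₆⟩ + ⟨z₁z₃⟩⟨z₇⟩ + ⟨z₁z₄⟩⟨z₈⟩), where the last term is minus the contribution of the paper's Janhunen source term discretization in the y-direction. -/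

import Mathlib

open Real Matrix

/-- An ideal MHD state: density, velocity components, pressure, magnetic field components. -/
structure MHD where
  ρ : ℝ
  u : ℝ
  v : ℝ
  w : ℝ
  p : ℝ
  B1 : ℝ
  B2 : ℝ
  B3 : ℝ

namespace MHD

noncomputable section

/-- ‖u⃗‖² -/
def uSq (S : MHD) : ℝ := S.u ^ 2 + S.v ^ 2 + S.w ^ 2

/-- ‖B⃗‖² -/
def BSq (S : MHD) : ℝ := S.B1 ^ 2 + S.B2 ^ 2 + S.B3 ^ 2

/-- u⃗·B⃗ -/
def uDotB (S : MHD) : ℝ := S.u * S.B1 + S.v * S.B2 + S.w * S.B3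

/-- physical entropy s = ln p − γ ln ρ -/
def ent (γ : ℝ) (S : MHD) : ℝ := Real.log S.p - γ * Real.log S.ρ

/-- total energy density ρe -/
def rhoE (γ : ℝ) (S : MHD) : ℝ := S.p / (γ - 1) + S.ρ * S.uSq / 2 + S.BSq / 2

/-- entropy density U = −ρs/(γ−1) -/
def entU (γ : ℝ) (S : MHD) : ℝ := -(S.ρ * S.ent γ) / (γ - 1)

/-- x-direction entropy flux F = uU -/
def entF (γ : ℝ) (S : MHD) : ℝ := S.u * S.entU γ

/-- the entropy variables v⃗ = U_q -/
def entVar (γ : ℝ) (S : MHD) : Fin 8 → ℝ :=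
  ![(γ - S.ent γ) / (γ - 1) - S.ρ * S.uSq / (2 * S.p),
    S.ρ * S.u / S.p, S.ρ * S.v / S.p, S.ρ * S.w / S.p,
    -(S.ρ / S.p), S.ρ * S.B1 / S.p, S.ρ * S.B2 / S.p, S.ρ * S.B3 / S.p]

/-- x-direction physical flux f⃗ -/
def fluxX (γ : ℝ) (S : MHD) : Fin 8 → ℝ :=
  ![S.ρ * S.u,
    S.ρ * S.u ^ 2 + S.p + S.BSq / 2 - S.B1 ^ 2,
    S.ρ * S.u * S.v - S.B1 * S.B2,
    S.ρ * S.u * S.w - S.B1 * S.B3,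
    S.u * (S.rhoE γ + S.p + S.BSq / 2) - S.B1 * S.uDotB,
    0,
    S.u * S.B2 - S.v * S.B1,
    S.u * S.B3 - S.w * S.B1]

/-- the parameter vector z -/
def z (S : MHD) : Fin 8 → ℝ :=
  ![Real.sqrt (S.ρ / S.p), Real.sqrt (S.ρ / S.p) * S.u, Real.sqrt (S.ρ / S.p) * S.v,
    Real.sqrt (S.ρ / S.p) * S.w, Real.sqrt (S.ρ * S.p), S.B1, S.B2, S.B3]

end

end MHD

noncomputable section

open MHD

/-- logarithmic mean: (x−y)/(ln x − ln y), with the consistent value x when x = y. -/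
def lm (x y : ℝ) : ℝ := if x = y then x else (x - y) / (Real.log x - Real.log y)

/-- arithmetic mean -/
def am (x y : ℝ) : ℝ := (x + y) / 2

/-- ⟨z_i⟩ (note: `zA L R 0` is ⟨z₁⟩, …, `zA L R 7` is ⟨z₈⟩) -/
def zA (L R : MHD) (i : Fin 8) : ℝ := am (L.z i) (R.z i)

/-- ⟨z_i z_j⟩ -/
def zP (L R : MHD) (i j : Fin 8) : ℝ := am (L.z i * L.z j) (R.z i * R.z j)

/-- ⟨z₁z₂⟩⟨z₆⟩ + ⟨z₁z₃⟩⟨z₇⟩ + ⟨z₁z₄⟩⟨z₈⟩, the x-direction source factor -/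
def srcX (L R : MHD) : ℝ :=
  zP L R 0 1 * zA L R 5 + zP L R 0 2 * zA L R 6 + zP L R 0 3 * zA L R 7

/-- the entropy conserving numerical flux of Theorem 1 (x-direction) -/
def ecFlux (γ : ℝ) (L R : MHD) : Fin 8 → ℝ :=
  ![zA L R 1 * lm (L.z 4) (R.z 4),
    zA L R 4 / zA L R 0 + (zA L R 1) ^ 2 * lm (L.z 4) (R.z 4) / zA L R 0
      + (zP L R 5 5 + zP L R 6 6 + zP L R 7 7) / 2 - zP L R 5 5,
    zA L R 1 * zA L R 2 * lm (L.z 4) (R.z 4) / zA L R 0 - zP L R 5 6,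
    zA L R 1 * zA L R 3 * lm (L.z 4) (R.z 4) / zA L R 0 - zP L R 5 7,
    (γ / (γ - 1)) * (zA L R 1 / zA L R 0) *
        (((γ + 1) / (2 * γ)) * lm (L.z 4) (R.z 4) / lm (L.z 0) (R.z 0)
          + ((γ - 1) / (2 * γ)) * (zA L R 4 / zA L R 0))
      + zA L R 1 * lm (L.z 4) (R.z 4) / 2 *
          ((zA L R 1) ^ 2 + (zA L R 2) ^ 2 + (zA L R 3) ^ 2) / (zA L R 0) ^ 2
      + (zA L R 6 / zP L R 0 0) * (zP L R 0 1 * zA L R 6 - zP L R 0 2 * zA L R 5)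
      + (zA L R 7 / zP L R 0 0) * (zP L R 0 1 * zA L R 7 - zP L R 0 3 * zA L R 5),
    0,
    (zP L R 0 1 * zA L R 6 - zP L R 0 2 * zA L R 5) / zP L R 0 0,
    (zP L R 0 1 * zA L R 7 - zP L R 0 3 * zA L R 5) / zP L R 0 0]

end

noncomputable section

open MHD

/-- the entropy conserving numerical flux in the y-direction (appendix Corollary) -/
def ecFluxY (γ : ℝ) (L R : MHD) : Fin 8 → ℝ :=
  let ρh := zA L R 0 * lm (L.z 4) (R.z 4)
  let u1 := zA L R 1 / zA L R 0
  let v1 := zA L R 2 / zA L R 0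
  let w1 := zA L R 3 / zA L R 0
  let p1 := zA L R 4 / zA L R 0
  let p2 := ((γ + 1) / (2 * γ)) * lm (L.z 4) (R.z 4) / lm (L.z 0) (R.z 0)
    + ((γ - 1) / (2 * γ)) * (zA L R 4 / zA L R 0)
  let u2 := zP L R 0 1 / zP L R 0 0
  let v2 := zP L R 0 2 / zP L R 0 0
  let w2 := zP L R 0 3 / zP L R 0 0
  let B1h := zA L R 5
  let B2h := zA L R 6
  let B3h := zA L R 7
  ![ρh * v1,
    ρh * u1 * v1 - zP L R 5 6,
    p1 + ρh * v1 ^ 2 + (zP L R 5 5 + zP L R 6 6 + zP L R 7 7) / 2 - zP L R 6 6,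
    ρh * v1 * w1 - zP L R 6 7,
    γ * v1 * p2 / (γ - 1) + (ρh * v1 / 2) * (u1 ^ 2 + v1 ^ 2 + w1 ^ 2)
      + v2 * B1h ^ 2 - u2 * B1h * B2h + v2 * B3h ^ 2 - w2 * B2h * B3h,
    v2 * B1h - u2 * B2h,
    0,
    v2 * B3h - w2 * B2h]

/-- the entropy conserving numerical flux in the z-direction (appendix Corollary) -/
def ecFluxZ (γ : ℝ) (L R : MHD) : Fin 8 → ℝ :=
  let ρh := zA L R 0 * lm (L.z 4) (R.z 4)
  let u1 := zA L R 1 / zA L R 0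
  let v1 := zA L R 2 / zA L R 0
  let w1 := zA L R 3 / zA L R 0
  let p1 := zA L R 4 / zA L R 0
  let p2 := ((γ + 1) / (2 * γ)) * lm (L.z 4) (R.z 4) / lm (L.z 0) (R.z 0)
    + ((γ - 1) / (2 * γ)) * (zA L R 4 / zA L R 0)
  let u2 := zP L R 0 1 / zP L R 0 0
  let v2 := zP L R 0 2 / zP L R 0 0
  let w2 := zP L R 0 3 / zP L R 0 0
  let B1h := zA L R 5
  let B2h := zA L R 6
  let B3h := zA L R 7
  ![ρh * w1,
    ρh * u1 * w1 - zP L R 5 7,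
    ρh * v1 * w1 - zP L R 6 7,
    p1 + ρh * w1 ^ 2 + (zP L R 5 5 + zP L R 6 6 + zP L R 7 7) / 2 - zP L R 7 7,
    γ * w1 * p2 / (γ - 1) + (ρh * w1 / 2) * (u1 ^ 2 + v1 ^ 2 + w1 ^ 2)
      + w2 * B1h ^ 2 - u2 * B1h * B3h + w2 * B2h ^ 2 - v2 * B2h * B3h,
    w2 * B1h - u2 * B3h,
    w2 * B2h - v2 * B3h,
    0]

end


section
variable {α : Type*}
lemma vec8_five (a b c d e f g h : α) : ![a,b,c,d,e,f,g,h] 5 = f := rfl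
lemma vec8_six (a b c d e f g h : α) : ![a,b,c,d,e,f,g,h] 6 = g := rfl
lemma vec8_seven (a b c d e f g h : α) : ![a,b,c,d,e,f,g,h] 7 = h := rfl
end

noncomputable section
lemma lm_pos {x y : ℝ} (hx : 0 < x) (hy : 0 < y) : 0 < lm x y := by
  unfold lm
  split_ifs with h
  · exact hx
  · rcases lt_or_gt_of_ne h with hlt | hgt
    · have hlog : Real.log x < Real.log y := Real.log_lt_log hx hlt
      have h2 := div_pos (by linarith : (0:ℝ) < y - x) (by linarith : (0:ℝ) < Real.log y - Real.log x)
      calc (0:ℝ) < (y - x) / (Real.log y - Real.log x) := h2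
        _ = (x - y) / (Real.log x - Real.log y) := by rw [div_eq_div_iff] <;> [ring; linarith; linarith]
    · have hlog : Real.log y < Real.log x := Real.log_lt_log hy hgt
      exact div_pos (by linarith) (by linarith)

lemma lm_spec {x y : ℝ} (hx : 0 < x) (hy : 0 < y) :
    lm x y * (Real.log y - Real.log x) = y - x := by
  unfold lm
  split_ifs with h
  · simp [h]
  · have hlog : Real.log x ≠ Real.log y := fun hc =>
      h (Real.log_injOn_pos (Set.mem_Ioi.2 hx) (Set.mem_Ioi.2 hy) hc)
    have hne : Real.log x - Real.log y ≠ 0 := sub_ne_zero.2 hlog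
    field_simp [hne]
    ring
end

set_option maxHeartbeats 1000000 in
lemma lemB (cL cR uL vL wL uR vR wR aL bL eL aR bR eR : ℝ)
    (hQ : cL * cL + cR * cR ≠ 0) :
    (cR ^ 2 * uR - cL ^ 2 * uL) * (-((aL * bL + aR * bR) / 2))
    + (cR ^ 2 * vR - cL ^ 2 * vL) *
        (((aL * aL + aR * aR) / 2 + (bL * bL + bR * bR) / 2 + (eL * eL + eR * eR) / 2) / 2
          - (bL * bL + bR * bR) / 2)
    + (cR ^ 2 * wR - cL ^ 2 * wL) * (-((bL * eL + bR * eR) / 2))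
    + (-(cR ^ 2) + cL ^ 2) *
        ((cL * (cL * vL) + cR * (cR * vR)) / 2 / ((cL * cL + cR * cR) / 2) * ((aL + aR) / 2) ^ 2
          - (cL * (cL * uL) + cR * (cR * uR)) / 2 / ((cL * cL + cR * cR) / 2) * ((aL + aR) / 2) * ((bL + bR) / 2)
          + (cL * (cL * vL) + cR * (cR * vR)) / 2 / ((cL * cL + cR * cR) / 2) * ((eL + eR) / 2) ^ 2
          - (cL * (cL * wL) + cR * (cR * wR)) / 2 / ((cL * cL + cR * cR) / 2) * ((bL + bR) / 2) * ((eL + eR) / 2))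
    + (cR ^ 2 * aR - cL ^ 2 * aL) *
        ((cL * (cL * vL) + cR * (cR * vR)) / 2 / ((cL * cL + cR * cR) / 2) * ((aL + aR) / 2)
          - (cL * (cL * uL) + cR * (cR * uR)) / 2 / ((cL * cL + cR * cR) / 2) * ((bL + bR) / 2))
    + (cR ^ 2 * eR - cL ^ 2 * eL) *
        ((cL * (cL * vL) + cR * (cR * vR)) / 2 / ((cL * cL + cR * cR) / 2) * ((eL + eR) / 2)
          - (cL * (cL * wL) + cR * (cR * wR)) / 2 / ((cL * cL + cR * cR) / 2) * ((bL + bR) / 2)) =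
    (cR ^ 2 * vR * (aR ^ 2 + bR ^ 2 + eR ^ 2) / 2 - cL ^ 2 * vL * (aL ^ 2 + bL ^ 2 + eL ^ 2) / 2)
    - (cR ^ 2 * bR * (uR * aR + vR * bR + wR * eR) - cL ^ 2 * bL * (uL * aL + vL * bL + wL * eL))
    + (bR - bL) * ((cL * (cL * uL) + cR * (cR * uR)) / 2 * ((aL + aR) / 2)
        + (cL * (cL * vL) + cR * (cR * vR)) / 2 * ((bL + bR) / 2)
        + (cL * (cL * wL) + cR * (cR * wR)) / 2 * ((eL + eR) / 2)) := by
  have hQ2 : cL ^ 2 + cR ^ 2 ≠ 0 := by intro h; apply hQ; linear_combination h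
  simp only [← pow_two] at *
  field_simp
  ring

set_option maxHeartbeats 1000000 in
lemma lemH2 (cL cR uL vL wL uR vR wR M5 : ℝ) (hS : cL + cR ≠ 0) :
    (cL ^ 2 * (uL ^ 2 + vL ^ 2 + wL ^ 2) / 2 - cR ^ 2 * (uR ^ 2 + vR ^ 2 + wR ^ 2) / 2) *
        ((cL + cR) / 2 * M5 * ((cL * vL + cR * vR) / 2 / ((cL + cR) / 2)))
    + (cR ^ 2 * uR - cL ^ 2 * uL) *
        ((cL + cR) / 2 * M5 * ((cL * uL + cR * uR) / 2 / ((cL + cR) / 2)) *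
          ((cL * vL + cR * vR) / 2 / ((cL + cR) / 2)))
    + (cR ^ 2 * vR - cL ^ 2 * vL) *
        ((cL + cR) / 2 * M5 * ((cL * vL + cR * vR) / 2 / ((cL + cR) / 2)) ^ 2)
    + (cR ^ 2 * wR - cL ^ 2 * wL) *
        ((cL + cR) / 2 * M5 * ((cL * vL + cR * vR) / 2 / ((cL + cR) / 2)) *
          ((cL * wL + cR * wR) / 2 / ((cL + cR) / 2)))
    + (-(cR ^ 2) + cL ^ 2) *
        ((cL + cR) / 2 * M5 * ((cL * vL + cR * vR) / 2 / ((cL + cR) / 2)) / 2 *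
          (((cL * uL + cR * uR) / 2 / ((cL + cR) / 2)) ^ 2
            + ((cL * vL + cR * vR) / 2 / ((cL + cR) / 2)) ^ 2
            + ((cL * wL + cR * wR) / 2 / ((cL + cR) / 2)) ^ 2)) = 0 := by
  field_simp
  ring

set_option maxHeartbeats 1000000 in
lemma lemH1 (γ cL cR dL dR vL vR M5 M1 lcL ldL : ℝ)
    (hg : γ - 1 ≠ 0) (hg0 : γ ≠ 0) (hM1 : M1 ≠ 0) (hM5 : M5 ≠ 0) (hS : cL + cR ≠ 0) :
    ((γ - ((ldL + (dR - dL) / M5) - (lcL + (cR - cL) / M1)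
          - γ * ((lcL + (cR - cL) / M1) + (ldL + (dR - dL) / M5)))) / (γ - 1)
      - (γ - (ldL - lcL - γ * (lcL + ldL))) / (γ - 1)) *
        ((cL + cR) / 2 * M5 * ((cL * vL + cR * vR) / 2 / ((cL + cR) / 2)))
    + (cR ^ 2 * vR - cL ^ 2 * vL) * ((dL + dR) / 2 / ((cL + cR) / 2))
    + (-(cR ^ 2) + cL ^ 2) *
        (γ * ((cL * vL + cR * vR) / 2 / ((cL + cR) / 2)) *
          (((γ + 1) / (2 * γ)) * M5 / M1 + ((γ - 1) / (2 * γ)) * ((dL + dR) / 2 / ((cL + cR) / 2))) / (γ - 1)) =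
    cR * dR * vR - cL * dL * vL := by
  field_simp
  ring

set_option maxHeartbeats 2000000 in
open MHD in
/-- entropy conservation of the EC flux in the y-direction:
⟦v⃗⟧·g* = ⟦ρv⟧ + ⟦ρv‖B⃗‖²/(2p)⟧ − ⟦ρB₂(u⃗·B⃗)/p⟧ + ⟦B₂⟧·(⟨z₁z₂⟩⟨z₆⟩ + ⟨z₁z₃⟩⟨z₇⟩ + ⟨z₁z₄⟩⟨z₈⟩). -/
theorem ec_flux_entropy_conservation_y (γ : ℝ) (hγ : 1 < γ) (L R : MHD)
    (hρL : 0 < L.ρ) (hpL : 0 < L.p) (hρR : 0 < R.ρ) (hpR : 0 < R.p) :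
    (∑ i : Fin 8, (R.entVar γ i - L.entVar γ i) * ecFluxY γ L R i) =
      (R.ρ * R.v - L.ρ * L.v)
      + (R.ρ * R.v * R.BSq / (2 * R.p) - L.ρ * L.v * L.BSq / (2 * L.p))
      - (R.ρ * R.B2 * R.uDotB / R.p - L.ρ * L.B2 * L.uDotB / L.p)
      + (R.B2 - L.B2) * srcX L R := by
  have hcL : (0:ℝ) < Real.sqrt (L.ρ / L.p) := Real.sqrt_pos.2 (div_pos hρL hpL)
  have hcR : (0:ℝ) < Real.sqrt (R.ρ / R.p) := Real.sqrt_pos.2 (div_pos hρR hpR)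
  have hdL : (0:ℝ) < Real.sqrt (L.ρ * L.p) := Real.sqrt_pos.2 (mul_pos hρL hpL)
  have hdR : (0:ℝ) < Real.sqrt (R.ρ * R.p) := Real.sqrt_pos.2 (mul_pos hρR hpR)
  simp only [entVar, ecFluxY, z, zA, zP, am, srcX, ent, uSq, BSq, uDotB,
    Fin.sum_univ_eight, Matrix.cons_val_zero, Matrix.cons_val_one, Matrix.head_cons,
    Matrix.cons_val_two, Matrix.tail_cons, Matrix.cons_val_three, Matrix.cons_val_four,
    vec8_five, vec8_six, vec8_seven]
  set cL := Real.sqrt (L.ρ / L.p) with hcLd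
  set cR := Real.sqrt (R.ρ / R.p) with hcRd
  set dL := Real.sqrt (L.ρ * L.p) with hdLd
  set dR := Real.sqrt (R.ρ * R.p) with hdRd
  have hρLeq : cL * dL = L.ρ := by
    rw [hcLd, hdLd, ← Real.sqrt_mul (div_pos hρL hpL).le,
      show L.ρ / L.p * (L.ρ * L.p) = L.ρ ^ 2 by field_simp, Real.sqrt_sq hρL.le]
  have hρReq : cR * dR = R.ρ := by
    rw [hcRd, hdRd, ← Real.sqrt_mul (div_pos hρR hpR).le,
      show R.ρ / R.p * (R.ρ * R.p) = R.ρ ^ 2 by field_simp, Real.sqrt_sq hρR.le]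
  have hpLeq : dL / cL = L.p := by
    rw [hcLd, hdLd, ← Real.sqrt_div (mul_pos hρL hpL).le,
      show L.ρ * L.p / (L.ρ / L.p) = L.p ^ 2 by field_simp, Real.sqrt_sq hpL.le]
  have hpReq : dR / cR = R.p := by
    rw [hcRd, hdRd, ← Real.sqrt_div (mul_pos hρR hpR).le,
      show R.ρ * R.p / (R.ρ / R.p) = R.p ^ 2 by field_simp, Real.sqrt_sq hpR.le]
  have hlpL : Real.log L.p = Real.log dL - Real.log cL := by
    rw [← hpLeq, Real.log_div hdL.ne' hcL.ne']
  have hlpR : Real.log R.p = Real.log dR - Real.log cR := by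
    rw [← hpReq, Real.log_div hdR.ne' hcR.ne']
  have hlρL : Real.log L.ρ = Real.log cL + Real.log dL := by
    rw [← hρLeq, Real.log_mul hcL.ne' hdL.ne']
  have hlρR : Real.log R.ρ = Real.log cR + Real.log dR := by
    rw [← hρReq, Real.log_mul hcR.ne' hdR.ne']
  rw [hlpL, hlpR, hlρL, hlρR]
  set M5 := lm dL dR with hM5d
  set M1 := lm cL cR with hM1d
  have hM5 : M5 ≠ 0 := (lm_pos hdL hdR).ne'
  have hM1 : M1 ≠ 0 := (lm_pos hcL hcR).ne'
  have h5 : Real.log dR = Real.log dL + (dR - dL) / M5 := by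
    have h := lm_spec hdL hdR
    rw [← hM5d] at h
    field_simp
    linear_combination h
  have h1 : Real.log cR = Real.log cL + (cR - cL) / M1 := by
    have h := lm_spec hcL hcR
    rw [← hM1d] at h
    field_simp
    linear_combination h
  rw [h5, h1]
  have hcpL : cL ^ 2 * L.p = L.ρ := by
    have h2 : cL ^ 2 = L.ρ / L.p := by rw [hcLd]; exact Real.sq_sqrt (div_pos hρL hpL).le
    rw [h2]; field_simp
  have hcpR : cR ^ 2 * R.p = R.ρ := by
    have h2 : cR ^ 2 = R.ρ / R.p := by rw [hcRd]; exact Real.sq_sqrt (div_pos hρR hpR).le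
    rw [h2]; field_simp
  have e0L : L.ρ / L.p = cL ^ 2 := by rw [← hcpL]; field_simp
  have e0R : R.ρ / R.p = cR ^ 2 := by rw [← hcpR]; field_simp
  have e1L : ∀ x : ℝ, L.ρ * x / L.p = cL ^ 2 * x := fun x => by
    rw [← hcpL]; field_simp
  have e1R : ∀ x : ℝ, R.ρ * x / R.p = cR ^ 2 * x := fun x => by
    rw [← hcpR]; field_simp
  have e2L : ∀ x : ℝ, L.ρ * x / (2 * L.p) = cL ^ 2 * x / 2 := fun x => by
    rw [← hcpL]; field_simp
  have e2R : ∀ x : ℝ, R.ρ * x / (2 * R.p) = cR ^ 2 * x / 2 := fun x => by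
    rw [← hcpR]; field_simp
  have e3L : ∀ x y : ℝ, L.ρ * x * y / L.p = cL ^ 2 * x * y := fun x y => by
    rw [← hcpL]; field_simp
  have e3R : ∀ x y : ℝ, R.ρ * x * y / R.p = cR ^ 2 * x * y := fun x y => by
    rw [← hcpR]; field_simp
  have e4L : ∀ x y : ℝ, L.ρ * x * y / (2 * L.p) = cL ^ 2 * x * y / 2 := fun x y => by
    rw [← hcpL]; field_simp
  have e4R : ∀ x y : ℝ, R.ρ * x * y / (2 * R.p) = cR ^ 2 * x * y / 2 := fun x y => by
    rw [← hcpR]; field_simp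
  simp only [e0L, e0R, e1L, e1R, e2L, e2R, e3L, e3R, e4L, e4R]
  rw [← hρLeq, ← hρReq]
  have hg1 : γ - 1 ≠ 0 := ne_of_gt (by linarith)
  have hg0 : γ ≠ 0 := ne_of_gt (by linarith)
  have hccadd : cL + cR ≠ 0 := ne_of_gt (add_pos hcL hcR)
  have hccsq : cL * cL + cR * cR ≠ 0 := ne_of_gt (add_pos (mul_pos hcL hcL) (mul_pos hcR hcR))
  linear_combination
    lemB cL cR L.u L.v L.w R.u R.v R.w L.B1 L.B2 L.B3 R.B1 R.B2 R.B3 hccsq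
    + lemH2 cL cR L.u L.v L.w R.u R.v R.w M5 hccadd
    + lemH1 γ cL cR dL dR L.v R.v M5 M1 (Real.log cL) (Real.log dL) hg1 hg0 hM1 hM5 hccadd
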